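/- arXiv:1003.0697 — 9 statements merged into one kernel-verified Lean document; each statement's English description precedes it below -/
import Mathlib

section
/- Let h > 0. The map α ↦ β := α/(1 - hα/2) is a well-defined bijection from the set A = {α ∈ ℂ : hα ≠ 2 and hα ≠ -2} onto the set B = {β ∈ ℂ : hβ ≠ -1 and hβ ≠ -2}, with inverse map β ↦ α := β/(1 + hβ/2); moreover, for corresponding α ∈ A and β ∈ B one has the identity 1 + hβ = (1 + hα/2)/(1 - hα/2), and consequently (1/h)·Log(1 + hβ) = ζ_h(α). -/
/-- For h > 0, the map α ↦ β = α/(1 - hα/2) is a bijection from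
A = {α : hα ≠ ±2} onto B = {β : hβ ≠ -1, hβ ≠ -2}, with inverse β ↦ β/(1 + hβ/2);
moreover 1 + hβ = (1 + hα/2)/(1 - hα/2) and (1/h)·Log(1 + hβ) = ζ_h(α). -/
theorem stmt0 (h : ℝ) (hh : 0 < h) :
    (∀ α : ℂ, (h : ℂ) * α ≠ 2 → (h : ℂ) * α ≠ -2 →
      ((h : ℂ) * (α / (1 - (h : ℂ) * α / 2)) ≠ -1 ∧
       (h : ℂ) * (α / (1 - (h : ℂ) * α / 2)) ≠ -2) ∧
      (α / (1 - (h : ℂ) * α / 2)) / (1 + (h : ℂ) * (α / (1 - (h : ℂ) * α / 2)) / 2) = α ∧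
      1 + (h : ℂ) * (α / (1 - (h : ℂ) * α / 2))
        = (1 + (h : ℂ) * α / 2) / (1 - (h : ℂ) * α / 2) ∧
      (1 / (h : ℂ)) * Complex.log (1 + (h : ℂ) * (α / (1 - (h : ℂ) * α / 2)))
        = (1 / (h : ℂ)) * Complex.log ((1 + (h : ℂ) * α / 2) / (1 - (h : ℂ) * α / 2))) ∧
    (∀ β : ℂ, (h : ℂ) * β ≠ -1 → (h : ℂ) * β ≠ -2 →
      ((h : ℂ) * (β / (1 + (h : ℂ) * β / 2)) ≠ 2 ∧
       (h : ℂ) * (β / (1 + (h : ℂ) * β / 2)) ≠ -2) ∧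
      (β / (1 + (h : ℂ) * β / 2)) / (1 - (h : ℂ) * (β / (1 + (h : ℂ) * β / 2)) / 2) = β) := by
  constructor
  · intro α h2 hm2
    have hd : 1 - (h : ℂ) * α / 2 ≠ 0 := fun H => h2 (by linear_combination -2 * H)
    have hd2 : (2 : ℂ) - (h : ℂ) * α ≠ 0 := fun H => h2 (by linear_combination -H)
    have key : 1 + (h : ℂ) * (α / (1 - (h : ℂ) * α / 2))
        = (1 + (h : ℂ) * α / 2) / (1 - (h : ℂ) * α / 2) := by
      field_simp
      ring
    refine ⟨⟨?_, ?_⟩, ?_, key, by rw [key]⟩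
    · intro H
      rw [mul_div_assoc'] at H
      have := (div_eq_iff hd).mp H
      exact hm2 (by linear_combination 2 * this)
    · intro H
      rw [mul_div_assoc'] at H
      have := (div_eq_iff hd).mp H
      have h0 : (0 : ℂ) = -2 := by linear_combination this
      norm_num at h0
    · have hb : 1 + (h : ℂ) * (α / (1 - (h : ℂ) * α / 2)) / 2 ≠ 0 := by
        rw [mul_div_assoc', div_div]
        intro H
        have hne : (1 - (h : ℂ) * α / 2) * 2 ≠ 0 := fun H2 => hd (by linear_combination H2 / 2)
        have h1 : (h : ℂ) * α / ((1 - (h : ℂ) * α / 2) * 2) = -1 := by linear_combination H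
        have := (div_eq_iff hne).mp h1
        have h0 : (0 : ℂ) = -2 := by linear_combination this
        norm_num at h0
      rw [div_eq_iff hb]
      field_simp
      linear_combination α * inv_mul_cancel₀ (show (2 : ℂ) - α * (h : ℂ) ≠ 0 by rw [mul_comm]; exact hd2)
  · intro β h1 hm2
    have hd : 1 + (h : ℂ) * β / 2 ≠ 0 := fun H => hm2 (by linear_combination 2 * H)
    have hd2 : (2 : ℂ) + (h : ℂ) * β ≠ 0 := fun H => hm2 (by linear_combination H)
    refine ⟨⟨?_, ?_⟩, ?_⟩
    · intro H
      rw [mul_div_assoc'] at H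
      have := (div_eq_iff hd).mp H
      have h0 : (0 : ℂ) = 2 := by linear_combination this
      norm_num at h0
    · intro H
      rw [mul_div_assoc'] at H
      have := (div_eq_iff hd).mp H
      exact h1 (by linear_combination this / 2)
    · have hb : 1 - (h : ℂ) * (β / (1 + (h : ℂ) * β / 2)) / 2 ≠ 0 := by
        rw [mul_div_assoc', div_div]
        intro H
        have : (h : ℂ) * β / ((1 + (h : ℂ) * β / 2) * 2) = 1 := by linear_combination -H
        have := (div_eq_one_iff_eq (by
          intro H2
          exact hd (by linear_combination H2 / 2))).mp this
        have h0 : (0 : ℂ) = 2 := by linear_combination this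
        norm_num at h0
      rw [div_eq_iff hb]
      field_simp
      linear_combination β * inv_mul_cancel₀ (show (2 : ℂ) + β * (h : ℂ) ≠ 0 by rw [mul_comm]; exact hd2)
end

section
/- For every h > 0, the image of the imaginary axis {i·ω : ω ∈ ℝ} under the map ζ_h equals the open segment {i·η : η ∈ ℝ, -π/h < η < π/h} of the imaginary axis. (Note that for real ω one has 1 ± i·hω/2 ≠ 0, so ζ_h(iω) is defined for every ω ∈ ℝ.) -/
lemma quot (x : ℝ) :
    (1 + Complex.I * x) / (1 - Complex.I * x)
      = Complex.exp (((2 * Real.arctan x : ℝ) : ℂ) * Complex.I) := by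
  have hpos : (0:ℝ) < 1 + x ^ 2 := by positivity
  have hden : (1 : ℂ) - Complex.I * x ≠ 0 := by
    intro hzero
    have := congrArg Complex.re hzero
    simp at this
  have hc : Real.cos (2 * Real.arctan x) = (1 - x ^ 2) / (1 + x ^ 2) := by
    rw [Real.cos_two_mul, Real.cos_arctan, div_pow, one_pow, Real.sq_sqrt hpos.le]
    field_simp
    ring
  have hs : Real.sin (2 * Real.arctan x) = 2 * x / (1 + x ^ 2) := by
    have hsq : Real.sqrt (1 + x ^ 2) * Real.sqrt (1 + x ^ 2) = 1 + x ^ 2 :=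
      Real.mul_self_sqrt hpos.le
    rw [Real.sin_two_mul, Real.sin_arctan, Real.cos_arctan]
    field_simp
    rw [Real.sq_sqrt hpos.le]
  rw [Complex.exp_mul_I, ← Complex.ofReal_cos, ← Complex.ofReal_sin, hc, hs]
  have hne : ((1 + x ^ 2 : ℝ) : ℂ) ≠ 0 := by
    exact_mod_cast hpos.ne'
  have hne' : (1:ℂ) + (x:ℂ) ^ 2 ≠ 0 := by push_cast at hne; exact hne
  rw [div_eq_iff hden]
  push_cast
  field_simp [hne']
  linear_combination (2 * (x:ℂ) ^ 2) * Complex.I_sq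

lemma key (h : ℝ) (hh : 0 < h) (ω : ℝ) :
    (1 / (h : ℂ)) * Complex.log
        ((1 + (h : ℂ) * (Complex.I * (ω : ℂ)) / 2) / (1 - (h : ℂ) * (Complex.I * (ω : ℂ)) / 2))
      = Complex.I * ((2 / h * Real.arctan (h * ω / 2) : ℝ) : ℂ) := by
  have hx : ((h : ℂ) * (Complex.I * (ω : ℂ)) / 2) = Complex.I * ((h * ω / 2 : ℝ) : ℂ) := by
    push_cast; ring
  rw [hx, quot (h * ω / 2)]
  have hθb1 : -(Real.pi / 2) < Real.arctan (h * ω / 2) := Real.neg_pi_div_two_lt_arctan _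
  have hθb2 : Real.arctan (h * ω / 2) < Real.pi / 2 := Real.arctan_lt_pi_div_two _
  have hlog : Complex.log (Complex.exp (((2 * Real.arctan (h * ω / 2) : ℝ) : ℂ) * Complex.I))
      = ((2 * Real.arctan (h * ω / 2) : ℝ) : ℂ) * Complex.I := by
    apply Complex.log_exp
    · simp only [Complex.mul_I_im, Complex.ofReal_re]; linarith
    · simp only [Complex.mul_I_im, Complex.ofReal_re]; linarith
  rw [hlog]
  have hne : (h : ℂ) ≠ 0 := by exact_mod_cast hh.ne'
  push_cast
  field_simp

/-- For h > 0, the image of the imaginary axis under ζ_h equals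
the open segment {iη : -π/h < η < π/h} of the imaginary axis. -/
theorem stmt1 (h : ℝ) (hh : 0 < h) :
    Set.range (fun ω : ℝ =>
        (1 / (h : ℂ)) * Complex.log
          ((1 + (h : ℂ) * (Complex.I * (ω : ℂ)) / 2) / (1 - (h : ℂ) * (Complex.I * (ω : ℂ)) / 2)))
      = {w : ℂ | ∃ η : ℝ, w = Complex.I * (η : ℂ) ∧ -(Real.pi / h) < η ∧ η < Real.pi / h} := by
  have e1 : 2 / h * (-(Real.pi / 2)) = -(Real.pi / h) := by field_simp
  have e2 : 2 / h * (Real.pi / 2) = Real.pi / h := by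
    field_simp
  have h2h : (0:ℝ) < 2 / h := by positivity
  ext w
  constructor
  · rintro ⟨ω, rfl⟩
    refine ⟨2 / h * Real.arctan (h * ω / 2), key h hh ω, ?_, ?_⟩
    · have := mul_lt_mul_of_pos_left (Real.neg_pi_div_two_lt_arctan (h * ω / 2)) h2h
      linarith
    · have := mul_lt_mul_of_pos_left (Real.arctan_lt_pi_div_two (h * ω / 2)) h2h
      linarith
  · rintro ⟨η, rfl, h1, h2⟩
    refine ⟨2 / h * Real.tan (h * η / 2), ?_⟩
    have hπ : h * (Real.pi / h) = Real.pi := by field_simp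
    beta_reduce
    rw [key h hh]
    congr 1
    have harg : h * (2 / h * Real.tan (h * η / 2)) / 2 = Real.tan (h * η / 2) := by
      field_simp
    rw [harg, Real.arctan_tan (by nlinarith [mul_lt_mul_of_pos_left h2 hh])
      (by nlinarith [mul_lt_mul_of_pos_left h1 hh])]
    have hne : (h : ℂ) ≠ 0 := by exact_mod_cast hh.ne'
    push_cast
    rw [show (2:ℂ) / h * ((h:ℂ) * η / 2) = (h / h) * η from by ring, div_self hne, one_mul]
end

section
/- For every h > 0, the image of the open disc {z ∈ ℂ : |z| < 2/h} under the map ζ_h equals the open horizontal strip {ζ ∈ ℂ : -π/(2h) < Im ζ < π/(2h)}. (Note that |z| < 2/h implies 1 + hz/2 ≠ 0 and 1 - hz/2 ≠ 0, so ζ_h(z) is defined on the disc.) -/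
/-- For h > 0, the image of the open disc |z| < 2/h under ζ_h equals
the open horizontal strip -π/(2h) < Im ζ < π/(2h). -/
theorem stmt3 (h : ℝ) (hh : 0 < h) :
    (fun z : ℂ =>
        (1 / (h : ℂ)) * Complex.log ((1 + (h : ℂ) * z / 2) / (1 - (h : ℂ) * z / 2))) ''
      {z : ℂ | ‖z‖ < 2 / h}
    = {ζ : ℂ | -(Real.pi / (2 * h)) < ζ.im ∧ ζ.im < Real.pi / (2 * h)} := by
  have hhC : (h : ℂ) ≠ 0 := by exact_mod_cast hh.ne'
  have hinv : 0 < 1 / h := by positivity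
  ext ζ
  simp only [Set.mem_image, Set.mem_setOf_eq]
  constructor
  · rintro ⟨z, hz, rfl⟩
    set u : ℂ := (h : ℂ) * z / 2 with hu_def
    set w : ℂ := (1 + u) / (1 - u) with hw_def
    have hu : ‖u‖ < 1 := by
      have : ‖u‖ = h * ‖z‖ / 2 := by
        simp [hu_def, abs_of_pos hh]
      rw [this]
      rw [lt_div_iff₀ hh] at hz
      linarith
    clear_value w
    clear_value u
    have hden : (1 : ℂ) - u ≠ 0 := by
      intro hc
      have hu1 : u = 1 := by linear_combination -hc
      rw [hu1] at hu
      simp at hu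
    have hre : 0 < w.re := by
      have hns : 0 < Complex.normSq (1 - u) := Complex.normSq_pos.2 hden
      have habs : u.re * u.re + u.im * u.im < 1 := by
        have h1 := Complex.sq_norm u
        rw [Complex.normSq_apply] at h1
        nlinarith [norm_nonneg u]
      rw [hw_def, Complex.div_re]
      simp only [Complex.add_re, Complex.one_re, Complex.sub_re, Complex.add_im,
        Complex.one_im, Complex.sub_im]
      rw [← add_div]
      apply div_pos _ hns
      nlinarith
    have harg : |w.arg| < Real.pi / 2 :=
      Complex.abs_arg_lt_pi_div_two_iff.2 (Or.inl hre)
    rw [abs_lt] at harg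
    have him : ((1 / (h : ℂ)) * Complex.log w).im = (1 / h) * w.arg := by
      have e : (1 / (h : ℂ)) = ((1 / h : ℝ) : ℂ) := by push_cast; ring
      rw [e, Complex.mul_im]
      simp [Complex.log_im]
    constructor
    · rw [him]
      calc -(Real.pi / (2 * h)) = (1 / h) * (-(Real.pi / 2)) := by ring
        _ < (1 / h) * w.arg := mul_lt_mul_of_pos_left harg.1 hinv
    · rw [him]
      calc (1 / h) * w.arg < (1 / h) * (Real.pi / 2) := mul_lt_mul_of_pos_left harg.2 hinv
        _ = Real.pi / (2 * h) := by ring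
  · rintro ⟨h1, h2⟩
    set w : ℂ := Complex.exp ((h : ℂ) * ζ) with hw_def
    have him_hζ : ((h : ℂ) * ζ).im = h * ζ.im := by
      simp [Complex.mul_im]
    have e1 : h * -(Real.pi / (2 * h)) = -(Real.pi / 2) := by field_simp
    have e2 : h * (Real.pi / (2 * h)) = Real.pi / 2 := by field_simp
    have hb1 : -(Real.pi / 2) < h * ζ.im := by
      have := mul_lt_mul_of_pos_left h1 hh
      linarith
    have hb2 : h * ζ.im < Real.pi / 2 := by
      have := mul_lt_mul_of_pos_left h2 hh
      linarith
    have hre : 0 < w.re := by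
      rw [hw_def, Complex.exp_re, him_hζ]
      exact mul_pos (Real.exp_pos _) (Real.cos_pos_of_mem_Ioo ⟨hb1, hb2⟩)
    clear_value w
    have hw1 : w + 1 ≠ 0 := by
      intro hc
      have : (w + 1).re = 0 := by rw [hc]; simp
      rw [Complex.add_re, Complex.one_re] at this
      linarith
    refine ⟨(2 / (h : ℂ)) * ((w - 1) / (w + 1)), ?_, ?_⟩
    · have hlt : ‖w - 1‖ < ‖w + 1‖ := by
        have hns : Complex.normSq (w - 1) < Complex.normSq (w + 1) := by
          simp only [Complex.normSq_apply, Complex.sub_re, Complex.sub_im,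
            Complex.add_re, Complex.add_im, Complex.one_re, Complex.one_im]
          nlinarith
        nlinarith [Complex.sq_norm (w - 1), Complex.sq_norm (w + 1),
          norm_nonneg (w - 1), norm_nonneg (w + 1)]
      show ‖_‖ < 2 / h
      rw [norm_mul, norm_div, norm_div, Complex.norm_two, Complex.norm_real, Real.norm_eq_abs, abs_of_pos hh]
      have h2h : 0 < 2 / h := by positivity
      calc 2 / h * (‖w - 1‖ / ‖w + 1‖) < 2 / h * 1 := by
            apply mul_lt_mul_of_pos_left _ h2h
            rw [div_lt_one (norm_pos_iff.2 hw1)]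
            exact hlt
        _ = 2 / h := mul_one _
    · show (1 / (h : ℂ)) * Complex.log _ = ζ
      have hnum : 1 + (h : ℂ) * ((2 / (h : ℂ)) * ((w - 1) / (w + 1))) / 2 = 2 * w / (w + 1) := by
        field_simp
        ring
      have hden : 1 - (h : ℂ) * ((2 / (h : ℂ)) * ((w - 1) / (w + 1))) / 2 = 2 / (w + 1) := by
        field_simp
        ring
      rw [hnum, hden]
      have hratio : (2 * w / (w + 1)) / (2 / (w + 1)) = w := by
        field_simp
      rw [hratio, hw_def, Complex.log_exp (by rw [him_hζ]; linarith [Real.pi_gt_three])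
        (by rw [him_hζ]; linarith [Real.pi_gt_three])]
      field_simp
end

section
/- Let ε > 0 and let α, β ∈ ℂ satisfy εα ≠ 2, εα ≠ -2, εβ ≠ 2, εβ ≠ -2 and 4 + ε²αβ ≠ 0. Define α⊕β := (α + β)/(1 + ε²αβ/4). Then ε(α⊕β) ≠ 2 and ε(α⊕β) ≠ -2, and for all n, m ∈ ℤ: (1) E_α(n+1) = ((1 + εα/2)/(1 - εα/2))·E_α(n); (2) E_α(n)·E_{-α}(n) = 1; (3) conj(E_α(n)) = E_{conj(α)}(n); (4) E_α(n)·E_α(m) = E_α(n+m); (5) E_α(n)·E_β(n) = E_{α⊕β}(n). -/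
/-- The Cayley-exponential function on the time scale εℤ:
E_α(n) = ((1 + εα/2)/(1 - εα/2))^n. -/
noncomputable def cayleyExp (ε : ℝ) (α : ℂ) (n : ℤ) : ℂ :=
  ((1 + (ε : ℂ) * α / 2) / (1 - (ε : ℂ) * α / 2)) ^ n


/-- Regressivity of α⊕β := (α+β)/(1+ε²αβ/4) and the five basic
properties of the Cayley-exponential on εℤ. -/
theorem stmt5 (ε : ℝ) (hε : 0 < ε) (α β : ℂ)
    (hα : (ε : ℂ) * α ≠ 2) (hα' : (ε : ℂ) * α ≠ -2)
    (hβ : (ε : ℂ) * β ≠ 2) (hβ' : (ε : ℂ) * β ≠ -2)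
    (hαβ : 4 + (ε : ℂ) ^ 2 * α * β ≠ 0) :
    ((ε : ℂ) * ((α + β) / (1 + (ε : ℂ) ^ 2 * α * β / 4)) ≠ 2 ∧
     (ε : ℂ) * ((α + β) / (1 + (ε : ℂ) ^ 2 * α * β / 4)) ≠ -2) ∧
    ∀ n m : ℤ,
      cayleyExp ε α (n + 1)
        = ((1 + (ε : ℂ) * α / 2) / (1 - (ε : ℂ) * α / 2)) * cayleyExp ε α n ∧
      cayleyExp ε α n * cayleyExp ε (-α) n = 1 ∧
      (starRingEnd ℂ) (cayleyExp ε α n) = cayleyExp ε ((starRingEnd ℂ) α) n ∧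
      cayleyExp ε α n * cayleyExp ε α m = cayleyExp ε α (n + m) ∧
      cayleyExp ε α n * cayleyExp ε β n
        = cayleyExp ε ((α + β) / (1 + (ε : ℂ) ^ 2 * α * β / 4)) n := by
  have h4 : (1 : ℂ) + (ε : ℂ) ^ 2 * α * β / 4 ≠ 0 := by
    intro h; apply hαβ; linear_combination 4 * h
  have hd : ∀ γ : ℂ, (ε : ℂ) * γ ≠ 2 → 1 - (ε : ℂ) * γ / 2 ≠ 0 := by
    intro γ hγ h
    apply hγ; linear_combination -2 * h
  have hn : ∀ γ : ℂ, (ε : ℂ) * γ ≠ -2 → 1 + (ε : ℂ) * γ / 2 ≠ 0 := by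
    intro γ hγ h
    apply hγ; linear_combination 2 * h
  have hbne : ∀ γ : ℂ, (ε : ℂ) * γ ≠ 2 → (ε : ℂ) * γ ≠ -2 →
      (1 + (ε : ℂ) * γ / 2) / (1 - (ε : ℂ) * γ / 2) ≠ 0 :=
    fun γ h1 h2 => div_ne_zero (hn γ h2) (hd γ h1)
  set γ : ℂ := (α + β) / (1 + (ε : ℂ) ^ 2 * α * β / 4) with hγdef
  have hγ2 : (ε : ℂ) * γ ≠ 2 := by
    intro h
    rw [hγdef, mul_div_assoc'] at h
    rw [div_eq_iff h4] at h
    have : ((ε : ℂ) * α - 2) * ((ε : ℂ) * β - 2) = 0 := by linear_combination -2 * h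
    rcases mul_eq_zero.1 this with h' | h'
    · exact hα (by linear_combination h')
    · exact hβ (by linear_combination h')
  have hγ2' : (ε : ℂ) * γ ≠ -2 := by
    intro h
    rw [hγdef, mul_div_assoc'] at h
    rw [div_eq_iff h4] at h
    have : ((ε : ℂ) * α + 2) * ((ε : ℂ) * β + 2) = 0 := by linear_combination 2 * h
    rcases mul_eq_zero.1 this with h' | h'
    · exact hα' (by linear_combination h')
    · exact hβ' (by linear_combination h')
  refine ⟨⟨hγ2, hγ2'⟩, fun n m => ?_⟩
  have hbα := hbne α hα hα'
  refine ⟨?_, ?_, ?_, ?_, ?_⟩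
  · rw [cayleyExp, cayleyExp, zpow_add_one₀ hbα, mul_comm]
  · rw [cayleyExp, cayleyExp]
    have hbase : (1 + (ε : ℂ) * (-α) / 2) / (1 - (ε : ℂ) * (-α) / 2)
        = ((1 + (ε : ℂ) * α / 2) / (1 - (ε : ℂ) * α / 2))⁻¹ := by
      rw [inv_div]; ring_nf
    rw [hbase, inv_zpow, mul_inv_cancel₀ (zpow_ne_zero _ hbα)]
  · rw [cayleyExp, cayleyExp, map_zpow₀]
    congr 1
    simp [map_div₀, map_add, map_sub, map_mul, Complex.conj_ofReal, map_ofNat]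
  · rw [cayleyExp, cayleyExp, cayleyExp, zpow_add₀ hbα]
  · rw [cayleyExp, cayleyExp, cayleyExp, ← mul_zpow]
    congr 1
    have hγval : (ε : ℂ) * γ = (ε : ℂ) * (α + β) / (1 + (ε : ℂ) ^ 2 * α * β / 4) := by
      rw [hγdef]; ring
    rw [div_mul_div_comm]
    rw [div_eq_div_iff (mul_ne_zero (hd α hα) (hd β hβ)) (hd γ hγ2)]
    rw [hγval]
    field_simp
    ring
end

section
/- Let ε > 0 and α ∈ ℂ with εα ≠ 2 and εα ≠ -2. Define Cosh_α(n) := (E_α(n) + E_{-α}(n))/2 and Sinh_α(n) := (E_α(n) - E_{-α}(n))/2 for n ∈ ℤ. Then for all n ∈ ℤ: Cosh_α(n)² - Sinh_α(n)² = 1; (Cosh_α(n+1) - Cosh_α(n))/ε = α·(Sinh_α(n) + Sinh_α(n+1))/2; and (Sinh_α(n+1) - Sinh_α(n))/ε = α·(Cosh_α(n) + Cosh_α(n+1))/2. -/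
/-- The Cayley-hyperbolic cosine on εℤ. -/
noncomputable def cayleyCosh (ε : ℝ) (α : ℂ) (n : ℤ) : ℂ :=
  (cayleyExp ε α n + cayleyExp ε (-α) n) / 2

/-- The Cayley-hyperbolic sine on εℤ. -/
noncomputable def cayleySinh (ε : ℝ) (α : ℂ) (n : ℤ) : ℂ :=
  (cayleyExp ε α n - cayleyExp ε (-α) n) / 2

/-- Pythagorean identity Cosh² - Sinh² = 1 and the first-order
difference relations for the Cayley-hyperbolic functions on εℤ. -/
theorem stmt10 (ε : ℝ) (hε : 0 < ε) (α : ℂ)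
    (h2 : (ε : ℂ) * α ≠ 2) (h2' : (ε : ℂ) * α ≠ -2) :
    ∀ n : ℤ,
      cayleyCosh ε α n ^ 2 - cayleySinh ε α n ^ 2 = 1 ∧
      (cayleyCosh ε α (n + 1) - cayleyCosh ε α n) / (ε : ℂ)
        = α * (cayleySinh ε α n + cayleySinh ε α (n + 1)) / 2 ∧
      (cayleySinh ε α (n + 1) - cayleySinh ε α n) / (ε : ℂ)
        = α * (cayleyCosh ε α n + cayleyCosh ε α (n + 1)) / 2 := by
  intro n
  have hε' : (ε : ℂ) ≠ 0 := by exact_mod_cast hε.ne'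
  have hu : 1 + (ε : ℂ) * α / 2 ≠ 0 := by
    intro h; exact h2' (by linear_combination 2 * h)
  have hv : 1 - (ε : ℂ) * α / 2 ≠ 0 := by
    intro h; exact h2 (by linear_combination -2 * h)
  have ha : (1 + (ε : ℂ) * α / 2) / (1 - (ε : ℂ) * α / 2) ≠ 0 := div_ne_zero hu hv
  have hx : cayleyExp ε α n ≠ 0 := zpow_ne_zero n ha
  have hXne : cayleyExp ε α (n + 1) ≠ 0 := zpow_ne_zero _ ha
  have key : ∀ m : ℤ, cayleyExp ε (-α) m = (cayleyExp ε α m)⁻¹ := by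
    intro m
    unfold cayleyExp
    rw [← inv_zpow, inv_div]
    congr 2 <;> ring
  have succ : cayleyExp ε α (n + 1)
      = ((1 + (ε : ℂ) * α / 2) / (1 - (ε : ℂ) * α / 2)) * cayleyExp ε α n := by
    unfold cayleyExp
    rw [zpow_add_one₀ ha, mul_comm]
  set x := cayleyExp ε α n with hxd
  set X := cayleyExp ε α (n + 1) with hXd
  have hxy : x * x⁻¹ = 1 := mul_inv_cancel₀ hx
  have hXY : X * X⁻¹ = 1 := mul_inv_cancel₀ hXne
  have hX : X * (1 - (ε : ℂ) * α / 2) = (1 + (ε : ℂ) * α / 2) * x := by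
    rw [succ, div_mul_eq_mul_div, div_mul_eq_mul_div, div_eq_iff hv]
  unfold cayleyCosh cayleySinh
  rw [key n, key (n + 1)]
  have h2c : (2 : ℂ) ≠ 0 := two_ne_zero
  refine ⟨by linear_combination hxy, ?_, ?_⟩
  · rw [div_eq_div_iff hε' h2c]
    linear_combination (1 - x⁻¹ * X⁻¹) * hX - (1 + (ε : ℂ) * α / 2) * X⁻¹ * hxy
      + (1 - (ε : ℂ) * α / 2) * x⁻¹ * hXY
  · rw [div_eq_div_iff hε' h2c]
    linear_combination (1 + x⁻¹ * X⁻¹) * hX + (1 + (ε : ℂ) * α / 2) * X⁻¹ * hxy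
      - (1 - (ε : ℂ) * α / 2) * x⁻¹ * hXY
end

section
/- Let ε > 0 and α ∈ ℂ with εα ≠ 2 and εα ≠ -2. Define Cosh_α(n) := (E_α(n) + E_{-α}(n))/2 and Sinh_α(n) := (E_α(n) - E_{-α}(n))/2. Then both x = Cosh_α and x = Sinh_α satisfy, for all n ∈ ℤ: (x(n+2) - 2x(n+1) + x(n))/ε² = α²·(x(n) + 2x(n+1) + x(n+2))/4. -/
lemma cayleyExp_eq (ε : ℝ) (hε : (ε : ℂ) ≠ 0) (β : ℂ)
    (hb : (ε : ℂ) * β ≠ 2) (hb' : (ε : ℂ) * β ≠ -2) (n : ℤ) :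
    (cayleyExp ε β (n + 2) - 2 * cayleyExp ε β (n + 1) + cayleyExp ε β n) / (ε : ℂ) ^ 2
      = β ^ 2 * (cayleyExp ε β n + 2 * cayleyExp ε β (n + 1) + cayleyExp ε β (n + 2)) / 4 := by
  have hd : (1 - (ε : ℂ) * β / 2) ≠ 0 := by
    intro h
    apply hb
    have : (ε : ℂ) * β / 2 = 1 := by linear_combination -h
    linear_combination 2 * this
  have hn : (1 + (ε : ℂ) * β / 2) ≠ 0 := by
    intro h
    apply hb'
    linear_combination 2 * h
  set r : ℂ := (1 + (ε : ℂ) * β / 2) / (1 - (ε : ℂ) * β / 2) with hr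
  have hr0 : r ≠ 0 := div_ne_zero hn hd
  have e1 : cayleyExp ε β (n + 1) = r ^ n * r := by
    rw [cayleyExp, zpow_add_one₀ hr0]
  have e2 : cayleyExp ε β (n + 2) = r ^ n * (r * r) := by
    have : n + 2 = n + 1 + 1 := by ring
    rw [cayleyExp, this, zpow_add_one₀ hr0, zpow_add_one₀ hr0]
    ring
  have e0 : cayleyExp ε β n = r ^ n := rfl
  rw [e0, e1, e2]
  have h1 : r * (1 - (ε : ℂ) * β / 2) = 1 + (ε : ℂ) * β / 2 := div_mul_cancel₀ _ hd
  have key : (r * r - 2 * r + 1) / (ε : ℂ) ^ 2 = β ^ 2 * (1 + 2 * r + r * r) / 4 := by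
    rw [div_eq_div_iff (pow_ne_zero 2 hε) (by norm_num : (4:ℂ) ≠ 0)]
    linear_combination (2 * (2 * (r - 1) + (ε : ℂ) * β * (r + 1))) * h1
  rw [div_eq_div_iff (pow_ne_zero 2 hε) (by norm_num : (4:ℂ) ≠ 0)] at key ⊢
  linear_combination (r ^ n) * key

/-- Cayley-hyperbolic functions on εℤ satisfy the second-order
dynamic equation x^{ΔΔ} = α²·⟨⟨x⟩⟩. -/
theorem stmt13 (ε : ℝ) (hε : 0 < ε) (α : ℂ)
    (h2 : (ε : ℂ) * α ≠ 2) (h2' : (ε : ℂ) * α ≠ -2) :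
    ∀ n : ℤ,
      (cayleyCosh ε α (n + 2) - 2 * cayleyCosh ε α (n + 1) + cayleyCosh ε α n) / (ε : ℂ) ^ 2
        = α ^ 2 * (cayleyCosh ε α n + 2 * cayleyCosh ε α (n + 1) + cayleyCosh ε α (n + 2)) / 4 ∧
      (cayleySinh ε α (n + 2) - 2 * cayleySinh ε α (n + 1) + cayleySinh ε α n) / (ε : ℂ) ^ 2
        = α ^ 2 * (cayleySinh ε α n + 2 * cayleySinh ε α (n + 1) + cayleySinh ε α (n + 2)) / 4 := by
  intro n
  have hε0 : (ε : ℂ) ≠ 0 := by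
    exact_mod_cast Complex.ofReal_ne_zero.mpr hε.ne'
  have ha : (ε : ℂ) * (-α) ≠ 2 := by
    intro h; apply h2'; linear_combination -h
  have ha' : (ε : ℂ) * (-α) ≠ -2 := by
    intro h; apply h2; linear_combination -h
  have k1 := cayleyExp_eq ε hε0 α h2 h2' n
  have k2 := cayleyExp_eq ε hε0 (-α) ha ha' n
  rw [neg_sq] at k2
  constructor <;> simp only [cayleyCosh, cayleySinh] <;>
    field_simp at k1 k2 ⊢
  · linear_combination k1 + k2
  · linear_combination k1 - k2
end

section
/- Let ω, μ, t ∈ ℝ with μ ≠ 0. Then (sin(ω(t + 2μ)) - 2·sin(ω(t + μ)) + sin(ωt))/μ² + ω²·(sinc(ωμ/2))²·sin(ω(t + μ)) = 0, and likewise (cos(ω(t + 2μ)) - 2·cos(ω(t + μ)) + cos(ωt))/μ² + ω²·(sinc(ωμ/2))²·cos(ω(t + μ)) = 0. -/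
noncomputable def sinc (x : ℝ) : ℝ := if x = 0 then 1 else Real.sin x / x

lemma key_s16 (ω μ : ℝ) (hμ : μ ≠ 0) :
    ω ^ 2 * (sinc (ω * μ / 2)) ^ 2 = 4 * Real.sin (ω * μ / 2) ^ 2 / μ ^ 2 := by
  rcases eq_or_ne ω 0 with h | h
  · simp [h]
  · have hx : ω * μ / 2 ≠ 0 := by positivity
    rw [sinc, if_neg hx]
    field_simp
    ring

lemma coshalf (h : ℝ) : Real.cos h = 1 - 2 * Real.sin (h/2) ^ 2 := by
  have h2 : (2:ℝ) * (h/2) = h := by ring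
  have c := Real.cos_sq (h/2)
  rw [h2] at c
  have s := Real.sin_sq_add_cos_sq (h/2)
  linarith

/-- Exact trigonometric functions satisfy the dynamic equation
x^{ΔΔ}(t) + ω²·sinc²(ωμ/2)·x(σ(t)) = 0 on a time scale with constant graininess μ. -/
theorem stmt16 (ω μ t : ℝ) (hμ : μ ≠ 0) :
    (Real.sin (ω * (t + 2 * μ)) - 2 * Real.sin (ω * (t + μ)) + Real.sin (ω * t)) / μ ^ 2
      + ω ^ 2 * (sinc (ω * μ / 2)) ^ 2 * Real.sin (ω * (t + μ)) = 0 ∧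
    (Real.cos (ω * (t + 2 * μ)) - 2 * Real.cos (ω * (t + μ)) + Real.cos (ω * t)) / μ ^ 2
      + ω ^ 2 * (sinc (ω * μ / 2)) ^ 2 * Real.cos (ω * (t + μ)) = 0 := by
  have ha : ω * (t + 2 * μ) = ω * (t + μ) + ω * μ := by ring
  have hb : ω * t = ω * (t + μ) - ω * μ := by ring
  have hk := key_s16 ω μ hμ
  have hc := coshalf (ω * μ)
  have hμ2 : μ ^ 2 ≠ 0 := pow_ne_zero 2 hμ
  constructor
  · rw [ha, hb, Real.sin_add, Real.sin_sub, hk]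
    field_simp
    linear_combination 2 * Real.sin (ω * (t + μ)) * hc
  · rw [ha, hb, Real.cos_add, Real.cos_sub, hk]
    field_simp
    linear_combination 2 * Real.cos (ω * (t + μ)) * hc
end

section
/- Let ω, μ ∈ ℝ with sin(ωμ) ≠ 0. Suppose x, v : ℝ → ℝ are such that for every t ∈ ℝ the function x has derivative v(t) at t, and v has derivative -ω²·x(t) at t (i.e., x solves the harmonic oscillator equation ẍ + ω²x = 0 with velocity v = ẋ). Then for every t ∈ ℝ: ω·(x(t + μ) - x(t)·cos(ωμ))/sin(ωμ) = v(t). -/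
/-- For solutions of the harmonic oscillator ẍ + ω²x = 0 with velocity
v = ẋ, the modified delta derivative ω(x(t+μ) - x(t)cos(ωμ))/sin(ωμ) equals v(t). -/
theorem stmt17 (ω μ : ℝ) (hs : Real.sin (ω * μ) ≠ 0) (x v : ℝ → ℝ)
    (hx : ∀ t, HasDerivAt x (v t) t)
    (hv : ∀ t, HasDerivAt v (-(ω ^ 2) * x t) t) :
    ∀ t : ℝ, ω * (x (t + μ) - x t * Real.cos (ω * μ)) / Real.sin (ω * μ) = v t := by
  have hω : ω ≠ 0 := by
    rintro rfl; simp at hs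
  intro t
  set T := t + μ with hT
  set h : ℝ → ℝ := fun s => x s * Real.cos (ω * (T - s)) + v s * Real.sin (ω * (T - s)) / ω
    with hh
  have hder : ∀ s, HasDerivAt h 0 s := by
    intro s
    have hu : HasDerivAt (fun s : ℝ => ω * (T - s)) (-ω) s := by
      have := ((hasDerivAt_id s).const_sub T).const_mul ω
      simpa using this
    have hcos : HasDerivAt (fun s => Real.cos (ω * (T - s)))
        (-Real.sin (ω * (T - s)) * (-ω)) s :=
      by have := (Real.hasDerivAt_cos (ω * (T - s))).comp s hu; exact this
    have hsin : HasDerivAt (fun s => Real.sin (ω * (T - s)))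
        (Real.cos (ω * (T - s)) * (-ω)) s :=
      by have := (Real.hasDerivAt_sin (ω * (T - s))).comp s hu; exact this
    have H := (((hx s).mul hcos).add (((hv s).mul hsin).div_const ω))
    have : v s * Real.cos (ω * (T - s)) + x s * (-Real.sin (ω * (T - s)) * -ω) +
        (-(ω ^ 2) * x s * Real.sin (ω * (T - s)) + v s * (Real.cos (ω * (T - s)) * -ω)) / ω
        = 0 := by
      field_simp
      ring
    rw [this] at H
    exact H
  have hconst : h t = h T := by
    have : ∀ a b : ℝ, h a = h b := by
      intro a b
      have hd : Differentiable ℝ h := fun s => (hder s).differentiableAt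
      have hz : ∀ s, deriv h s = 0 := fun s => (hder s).deriv
      have := is_const_of_deriv_eq_zero hd hz a b
      exact this
    exact this t T
  have hTt : ω * (T - T) = 0 := by ring
  have hμ : ω * (T - t) = ω * μ := by rw [hT]; ring
  rw [hh] at hconst
  simp only [hTt, hμ, Real.cos_zero, Real.sin_zero] at hconst
  -- hconst : x t * cos(ωμ) + v t * sin(ωμ)/ω = x T * 1 + v T * 0 / ω
  have hxT : x T = x t * Real.cos (ω * μ) + v t * Real.sin (ω * μ) / ω := by
    rw [hconst]; ring
  rw [hxT]
  field_simp
  ring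
end

section
/- Let ω, μ ∈ ℝ with ω ≠ 0, μ ≠ 0 and sin(ωμ) ≠ 0, and let x : ℝ → ℝ. Define the operators (Δx)(t) := (x(t + μ) - x(t))/μ and (D_ω x)(t) := ω·(x(t + μ) - x(t)·cos(ωμ))/sin(ωμ). Then for every t ∈ ℝ: (Δ(Δx))(t) + ω²·(sinc(ωμ/2))²·x(t + μ) = (sinc(ωμ/2))²·(cos(ωμ/2))²·((D_ω(D_ω x))(t) + ω²·x(t)). In particular, since sin(ωμ) ≠ 0 forces sinc(ωμ/2) ≠ 0 and cos(ωμ/2) ≠ 0, the function x satisfies (Δ(Δx))(t) + ω²·(sinc(ωμ/2))²·x(t + μ) = 0 for all t if and only if (D_ω(D_ω x))(t) + ω²·x(t) = 0 for all t. -/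
/-- The delta derivative (forward difference quotient) with graininess μ. -/
noncomputable def deltaD (μ : ℝ) (x : ℝ → ℝ) : ℝ → ℝ := fun t => (x (t + μ) - x t) / μ

/-- The modified delta derivative x^{Δ''_ω} associated with the exact
discretization of the harmonic oscillator. -/
noncomputable def deltaMod (ω μ : ℝ) (x : ℝ → ℝ) : ℝ → ℝ :=
  fun t => ω * (x (t + μ) - x t * Real.cos (ω * μ)) / Real.sin (ω * μ)

/-- The identity
Δ(Δx) + ω²·sinc²(ωμ/2)·x∘σ = sinc²(ωμ/2)·cos²(ωμ/2)·(D_ω(D_ω x) + ω²x),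
and the consequent equivalence of the two second-order dynamic equations. -/
theorem stmt19 (ω μ : ℝ) (hω : ω ≠ 0) (hμ : μ ≠ 0) (hs : Real.sin (ω * μ) ≠ 0)
    (x : ℝ → ℝ) :
    (∀ t : ℝ,
      deltaD μ (deltaD μ x) t + ω ^ 2 * (sinc (ω * μ / 2)) ^ 2 * x (t + μ)
        = (sinc (ω * μ / 2)) ^ 2 * (Real.cos (ω * μ / 2)) ^ 2
          * (deltaMod ω μ (deltaMod ω μ x) t + ω ^ 2 * x t)) ∧
    ((∀ t : ℝ, deltaD μ (deltaD μ x) t + ω ^ 2 * (sinc (ω * μ / 2)) ^ 2 * x (t + μ) = 0) ↔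
     (∀ t : ℝ, deltaMod ω μ (deltaMod ω μ x) t + ω ^ 2 * x t = 0)) := by
  have hωμ : ω * μ / 2 ≠ 0 := by
    simp [div_eq_zero_iff, mul_eq_zero, hω, hμ]
  have hsinc : sinc (ω * μ / 2) = Real.sin (ω * μ / 2) / (ω * μ / 2) := by
    simp [sinc, hωμ]
  have hcos2 : Real.cos (ω * μ / 2) ^ 2 = (1 + Real.cos (ω * μ)) / 2 := by
    have := Real.cos_sq (ω * μ / 2)
    rw [show 2 * (ω * μ / 2) = ω * μ by ring] at this
    linarith
  have hsin2 : Real.sin (ω * μ / 2) ^ 2 = (1 - Real.cos (ω * μ)) / 2 := by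
    have := Real.sin_sq_add_cos_sq (ω * μ / 2)
    linarith
  have hpy : Real.sin (ω * μ) ^ 2 + Real.cos (ω * μ) ^ 2 = 1 := Real.sin_sq_add_cos_sq _
  have hcosne : Real.cos (ω * μ / 2) ≠ 0 := by
    intro h
    apply hs
    have : Real.cos (ω * μ / 2) ^ 2 = 0 := by rw [h]; ring
    nlinarith [hpy, hcos2]
  have hsinne : Real.sin (ω * μ / 2) ≠ 0 := by
    intro h
    apply hs
    have : Real.sin (ω * μ / 2) ^ 2 = 0 := by rw [h]; ring
    nlinarith [hpy, hsin2]
  have hsincne : sinc (ω * μ / 2) ≠ 0 := by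
    rw [hsinc]
    exact div_ne_zero hsinne hωμ
  have key : ∀ t : ℝ,
      deltaD μ (deltaD μ x) t + ω ^ 2 * (sinc (ω * μ / 2)) ^ 2 * x (t + μ)
        = (sinc (ω * μ / 2)) ^ 2 * (Real.cos (ω * μ / 2)) ^ 2
          * (deltaMod ω μ (deltaMod ω μ x) t + ω ^ 2 * x t) := by
    intro t
    simp only [deltaD, deltaMod, hsinc]
    rw [div_pow, hsin2, hcos2]
    have h2 : t + μ + μ = t + 2 * μ := by ring
    rw [h2]
    have hs2 : Real.sin (ω * μ) * Real.sin (ω * μ) = 1 - Real.cos (ω * μ) ^ 2 := by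
      nlinarith [hpy]
    field_simp
    have hsμ : Real.sin (μ * ω) ≠ 0 := by rwa [mul_comm μ ω]
    have hs2' : (1 - Real.cos (μ * ω)) * (1 + Real.cos (μ * ω)) = Real.sin (μ * ω) ^ 2 := by
      rw [mul_comm μ ω]; nlinarith [hpy]
    rw [hs2', mul_add, mul_div_cancel₀ _ (pow_ne_zero 2 hsμ), ← hs2']
    ring
  refine ⟨key, ?_⟩
  constructor
  · intro h t
    have := (key t).symm.trans (h t)
    have hne : (sinc (ω * μ / 2)) ^ 2 * (Real.cos (ω * μ / 2)) ^ 2 ≠ 0 :=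
      mul_ne_zero (pow_ne_zero _ hsincne) (pow_ne_zero _ hcosne)
    exact (mul_eq_zero.mp this).resolve_left hne
  · intro h t
    rw [key t, h t, mul_zero]
end
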